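/- Let X ∈ ℝ^{n×d} have n = d+1 rows, i ∈ {1..n}, and suppose X_{−i} (X with row i removed) has rank d. Let y ∈ ℝ^n, w*(−i) be the unique solution of X_{−i} w = y_{−i}, and X̃ = (X, y) ∈ ℝ^{n×(d+1)} the matrix with y appended as a column. Then det(X̃^⊤ X̃) = det(X_{−i}^⊤ X_{−i}) · (x_i^⊤ w*(−i) − y_i)². -/

import Mathlib

open Matrix Finset

noncomputable section

/-- The submatrix of `X` consisting of the rows indexed by the subset `S`. -/
def rowSub {n d : ℕ} (X : Matrix (Fin n) (Fin d) ℝ) (S : Finset (Fin n)) :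
    Matrix {i // i ∈ S} (Fin d) ℝ :=
  X.submatrix (fun i => (i : Fin n)) id

/-- `X_S^⊤ X_S`. -/
def gram {n d : ℕ} (X : Matrix (Fin n) (Fin d) ℝ) (S : Finset (Fin n)) :
    Matrix (Fin d) (Fin d) ℝ :=
  (rowSub X S)ᵀ * rowSub X S

/-- The matrix `X̃ = (X, y)` with the response vector `y` appended as a last column. -/
def augment {n d : ℕ} (X : Matrix (Fin n) (Fin d) ℝ) (y : Fin n → ℝ) :
    Matrix (Fin n) (Fin (d + 1)) ℝ :=
  Matrix.of fun r c => Fin.lastCases (y r) (fun j => X r j) c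

/-- For `n = d+1` rows with `X_{−i}` of rank `d` and `w*(−i)` the interpolating solution
on the remaining rows: `det(X̃^⊤X̃) = det(X_{−i}^⊤X_{−i}) (x_i^⊤w*(−i) − y_i)²`. -/
theorem augmented_det_leave_one_out {d : ℕ} (X : Matrix (Fin (d + 1)) (Fin d) ℝ)
    (y : Fin (d + 1) → ℝ) (i : Fin (d + 1))
    (hr : (rowSub X (Finset.univ.erase i)).rank = d)
    (w : Fin d → ℝ) (hw : ∀ j, j ≠ i → X.mulVec w j = y j) :
    ((augment X y)ᵀ * augment X y).det
      = (gram X (Finset.univ.erase i)).det * (X.mulVec w i - y i) ^ 2 := by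
  classical
  set M : Matrix (Fin d) (Fin d) ℝ := X.submatrix i.succAbove id with hM
  -- gram = Mᵀ * M
  have hgram : gram X (Finset.univ.erase i) = Mᵀ * M := by
    ext j k
    have hsum : ∀ f : Fin (d + 1) → ℝ,
        ∑ r ∈ Finset.univ.erase i, f r = ∑ t : Fin d, f (i.succAbove t) := by
      intro f
      have h1 : f i + ∑ r ∈ Finset.univ.erase i, f r = ∑ r : Fin (d + 1), f r :=
        Finset.add_sum_erase _ f (Finset.mem_univ i)
      have h2 := Fin.sum_univ_succAbove f i
      linarith [h1, h2]
    simp only [_root_.gram, rowSub, Matrix.mul_apply, Matrix.transpose_apply,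
      Matrix.submatrix_apply, id_eq, hM]
    rw [Finset.sum_coe_sort (Finset.univ.erase i) (fun r => X r j * X r k)]
    exact hsum (fun r => X r j * X r k)
  -- the column-operation matrix
  set C : Matrix (Fin (d + 1)) (Fin (d + 1)) ℝ :=
    Matrix.of (fun r c => if c = Fin.last d then
        (Fin.lastCases 1 (fun t => -w t) r : ℝ)
      else if r = c then 1 else 0) with hC
  have hCtri : C.BlockTriangular id := by
    intro r c h
    simp only [id_eq] at h
    simp only [hC, Matrix.of_apply]
    rw [if_neg, if_neg]
    · exact fun hrc => absurd hrc (ne_of_gt h)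
    · rintro rfl
      exact absurd (Fin.le_last r) (not_le.mpr h)
  have hCdiag : ∀ r, C r r = 1 := by
    intro r
    simp only [hC, Matrix.of_apply]
    split_ifs with h
    · subst h; simp
    · rfl
  have hCdet : C.det = 1 := by
    rw [Matrix.det_of_upperTriangular hCtri]
    simp [hCdiag]
  set z : Fin (d + 1) → ℝ := fun r => y r - X.mulVec w r with hz
  have hB : augment X y * C = augment X z := by
    ext r c
    rw [Matrix.mul_apply]
    refine Fin.lastCases ?_ (fun jc => ?_) c
    · have hCk : ∀ k : Fin (d + 1),
          C k (Fin.last d) = (Fin.lastCases 1 (fun t => -w t) k : ℝ) := by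
        intro k; simp [hC]
      simp_rw [hCk]
      rw [Fin.sum_univ_castSucc]
      simp only [augment, Matrix.of_apply, Fin.lastCases_last, Fin.lastCases_castSucc,
        mul_one, mul_neg]
      simp only [hz, Matrix.mulVec, dotProduct]
      rw [Finset.sum_neg_distrib]
      ring
    · have hCk : ∀ k : Fin (d + 1),
          C k (Fin.castSucc jc) = if k = Fin.castSucc jc then 1 else 0 := by
        intro k
        simp only [hC, Matrix.of_apply]
        rw [if_neg (Fin.castSucc_lt_last jc).ne]
      simp_rw [hCk, mul_ite, mul_one, mul_zero]
      rw [Finset.sum_ite_eq' Finset.univ (Fin.castSucc jc)]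
      simp [augment]
  have hzj : ∀ j, j ≠ i → z j = 0 := by
    intro j hj; simp [hz, hw j hj]
  -- determinant of the augmented matrix
  have hdetB : (augment X z).det
      = (-1 : ℝ) ^ ((i : ℕ) + d) * z i * M.det := by
    rw [Matrix.det_succ_column (augment X z) (Fin.last d)]
    rw [Finset.sum_eq_single i]
    · have hsub : (augment X z).submatrix i.succAbove (Fin.last d).succAbove = M := by
        ext r c
        simp [augment, Fin.succAbove_last, hM]
      rw [hsub]
      simp [augment]
    · intro b _ hb
      have : (augment X z) b (Fin.last d) = z b := by simp [augment]
      rw [this, hzj b hb]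
      ring
    · intro h
      exact absurd (Finset.mem_univ i) h
  have hdetA : (augment X y).det = (-1 : ℝ) ^ ((i : ℕ) + d) * z i * M.det := by
    have h := congrArg Matrix.det hB
    rw [Matrix.det_mul, hCdet, mul_one] at h
    rw [h, hdetB]
  rw [Matrix.det_mul, Matrix.det_transpose, hdetA, hgram, Matrix.det_mul,
    Matrix.det_transpose]
  have hzz : z i = -(X.mulVec w i - y i) := by simp [hz]
  rw [hzz]
  have h1 : ((-1 : ℝ) ^ ((i : ℕ) + d)) * ((-1 : ℝ) ^ ((i : ℕ) + d)) = 1 := by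
    rw [← pow_add, ← two_mul, pow_mul]
    norm_num
  linear_combination ((X.mulVec w i - y i) ^ 2 * (M.det * M.det)) * h1
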